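/- Let F : ℝⁿ ⇉ ℝ^q be polyhedral convex with recession mapping G, and C ⊆ ℝ^q a polyhedral convex cone. Define F_std(x) = F(x) + C, C_std = C + G(0), and G_std as the recession mapping of F_std. Then for every x ∈ ℝⁿ: F(x) + C = F_std(x) + C_std and G(x) + C = G_std(x) + C_std. Consequently, a point x̄ ∈ dom F is a minimizer for (F,C) if and only if it is a minimizer for (F_std, C_std). -/

import Mathlib

open Set Matrix Pointwise RealInnerProductSpace

def IsPolyhedron {E : Type*} [AddCommGroup E] [Module ℝ E] (P : Set E) : Prop :=
  ∃ (m : ℕ) (f : Fin m → (E →ₗ[ℝ] ℝ)) (b : Fin m → ℝ), P = {x | ∀ i, f i x ≤ b i}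

def graphOf {α β : Type*} (F : α → Set β) : Set (α × β) := {p | p.2 ∈ F p.1}

def recc {E : Type*} [AddCommGroup E] [Module ℝ E] (P : Set E) : Set E :=
  {d | ∀ p ∈ P, p + d ∈ P}

def IsConvexCone {E : Type*} [AddCommGroup E] [Module ℝ E] (C : Set E) : Prop :=
  Convex ℝ C ∧ ∀ c ∈ C, ∀ r : ℝ, 0 ≤ r → r • c ∈ C

private lemma sum_ite_mul' {ι : Type} [Fintype ι] [DecidableEq ι] (i0 : ι) (r : ℝ) (c : ι → ℝ) :
    ∑ i', (if i' = i0 then r else 0) * c i' = r * c i0 := by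
  rw [Finset.sum_eq_single i0] <;> simp +contextual

private lemma fm1 {ι : Type} [Fintype ι] (a : ι → ℝ) :
    ∃ (κ : Type) (_ : Fintype κ) (M : κ → ι → ℝ),
      (∀ k i, 0 ≤ M k i) ∧ (∀ k, ∑ i, M k i * a i = 0) ∧
      ∀ c : ι → ℝ, (∃ t : ℝ, ∀ i, a i * t ≤ c i) ↔ (∀ k, 0 ≤ ∑ i, M k i * c i) := by
  classical
  set M : ({i // a i = 0} ⊕ {p : ι × ι // 0 < a p.1 ∧ a p.2 < 0}) → ι → ℝ :=
    fun k i' => match k with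
      | Sum.inl i => if i' = i.1 then 1 else 0
      | Sum.inr p => (if i' = p.1.1 then -a p.1.2 else 0) + (if i' = p.1.2 then a p.1.1 else 0)
    with hM
  have hsuml : ∀ (i : {i // a i = 0}) (c : ι → ℝ), ∑ i', M (Sum.inl i) i' * c i' = c i.1 := by
    intro i c
    simp only [hM]
    rw [sum_ite_mul' i.1 1 c]; ring
  have hsumr : ∀ (p : {p : ι × ι // 0 < a p.1 ∧ a p.2 < 0}) (c : ι → ℝ),
      ∑ i', M (Sum.inr p) i' * c i' = (-a p.1.2) * c p.1.1 + a p.1.1 * c p.1.2 := by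
    intro p c
    simp only [hM, add_mul, Finset.sum_add_distrib]
    rw [sum_ite_mul' p.1.1 (-a p.1.2) c, sum_ite_mul' p.1.2 (a p.1.1) c]
  refine ⟨_, inferInstance, M, ?_, ?_, ?_⟩
  · rintro (⟨i, hi⟩ | ⟨⟨i, j⟩, hij⟩) i' <;> simp only [hM] <;> split_ifs <;>
      simp <;> nlinarith [hij.1, hij.2]
  · rintro (i | p)
    · rw [hsuml]; exact i.2
    · rw [hsumr]; ring
  · intro c
    constructor
    · rintro ⟨t, ht⟩ (i | p)
      · rw [hsuml]
        have := ht i.1; rw [i.2, zero_mul] at this; exact this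
      · rw [hsumr]
        have h1 := ht p.1.1; have h2 := ht p.1.2
        nlinarith [p.2.1, p.2.2]
    · intro h
      have hzero : ∀ i, a i = 0 → 0 ≤ c i := fun i hi => by
        have := h (Sum.inl ⟨i, hi⟩); rwa [hsuml] at this
      have hpair : ∀ i j, 0 < a i → a j < 0 → 0 ≤ (-a j) * c i + a i * c j := by
        intro i j hi hj
        have := h (Sum.inr ⟨(i,j), ⟨hi, hj⟩⟩); rwa [hsumr] at this
      set U : Finset ι := Finset.univ.filter (fun i => 0 < a i) with hU
      set L : Finset ι := Finset.univ.filter (fun i => a i < 0) with hL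
      refine ⟨if hUne : U.Nonempty then U.inf' hUne (fun i => c i / a i)
        else if hLne : L.Nonempty then L.sup' hLne (fun i => c i / a i) else 0, ?_⟩
      intro i
      rcases lt_trichotomy (a i) 0 with hai | hai | hai
      · have key : ∀ t, c i / a i ≤ t → a i * t ≤ c i := by
          intro t ht
          have h2 := mul_le_mul_of_nonpos_left ht (le_of_lt hai)
          have h3 : a i * (c i / a i) = c i := by
            rw [mul_comm, div_mul_cancel₀ _ hai.ne]
          linarith
        by_cases hUne : U.Nonempty
        · rw [dif_pos hUne]
          refine key _ (Finset.le_inf' hUne _ ?_)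
          intro i' hi'
          have hai' : 0 < a i' := by
            have := Finset.mem_filter.1 hi'; exact this.2
          have hp := hpair i' i hai' hai
          rw [le_div_iff₀ hai', div_mul_eq_mul_div, div_le_iff_of_neg hai]
          nlinarith
        · rw [dif_neg hUne]
          have hiL : i ∈ L := by simp [hL, hai]
          have hLne : L.Nonempty := ⟨i, hiL⟩
          rw [dif_pos hLne]
          exact key _ (Finset.le_sup' (f := fun i => c i / a i) hiL)
      · rw [hai, zero_mul]; exact hzero i hai
      · have hiU : i ∈ U := by simp [hU, hai]
        have hUne : U.Nonempty := ⟨i, hiU⟩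
        rw [dif_pos hUne]
        have h1 := Finset.inf'_le (f := fun i' => c i' / a i') hiU
        have h2 := mul_le_mul_of_nonneg_left h1 hai.le
        have h3 : a i * (c i / a i) = c i := by
          rw [mul_comm, div_mul_cancel₀ _ hai.ne']
        linarith

private def consL (q : ℕ) : (Fin q → ℝ) →ₗ[ℝ] (Fin (q+1) → ℝ) where
  toFun y := Fin.cons 0 y
  map_add' y z := by
    funext i
    refine Fin.cases ?_ ?_ i <;> simp
  map_smul' r y := by
    funext i
    refine Fin.cases ?_ ?_ i <;> simp

private lemma fmN {E : Type} [AddCommGroup E] [Module ℝ E] (q : ℕ) :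
    ∀ {ι : Type} [Fintype ι] (f : ι → E →ₗ[ℝ] ℝ) (g : ι → (Fin q → ℝ) →ₗ[ℝ] ℝ),
    ∃ (κ : Type) (_ : Fintype κ) (f' : κ → E →ₗ[ℝ] ℝ) (e : (ι → ℝ) → κ → ℝ),
      e 0 = 0 ∧ ∀ (b : ι → ℝ) (x : E),
        (∃ y, ∀ i, f i x + g i y ≤ b i) ↔ ∀ k, f' k x ≤ e b k := by
  induction q with
  | zero =>
    intro ι _ f g
    refine ⟨ι, inferInstance, f, fun b => b, rfl, ?_⟩
    intro b x
    constructor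
    · rintro ⟨y, hy⟩ i
      have hy0 : y = 0 := Subsingleton.elim _ _
      have h := hy i
      rwa [hy0, map_zero, add_zero] at h
    · intro h
      exact ⟨0, fun i => by rw [map_zero, add_zero]; exact h i⟩
  | succ q IH =>
    intro ι _ f g
    set a : ι → ℝ := fun i => g i (Fin.cons 1 0) with ha
    set g' : ι → (Fin q → ℝ) →ₗ[ℝ] ℝ := fun i => (g i).comp (consL q) with hg'
    have hdec : ∀ (i : ι) (t : ℝ) (y' : Fin q → ℝ),
        g i (Fin.cons t y') = a i * t + g' i y' := by
      intro i t y'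
      have hy : (Fin.cons t y' : Fin (q+1) → ℝ)
          = t • (Fin.cons 1 0 : Fin (q+1) → ℝ) + (Fin.cons 0 y' : Fin (q+1) → ℝ) := by
        funext j
        refine Fin.cases ?_ ?_ j <;> simp
      rw [hy, map_add, _root_.map_smul]
      simp [hg', consL, smul_eq_mul, mul_comm]
      exact Or.inl rfl
    obtain ⟨κ₁, _, M, hMnn, hMa, hMiff⟩ := fm1 a
    set F1 : κ₁ → E →ₗ[ℝ] ℝ := fun k => ∑ i, M k i • f i with hF1
    set G1 : κ₁ → (Fin q → ℝ) →ₗ[ℝ] ℝ := fun k => ∑ i, M k i • g' i with hG1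
    set B1 : (ι → ℝ) → κ₁ → ℝ := fun b k => ∑ i, M k i * b i with hB1
    obtain ⟨κ, _, f', e', he'0, hiff⟩ := IH F1 G1
    refine ⟨κ, inferInstance, f', fun b => e' (B1 b), ?_, ?_⟩
    · have : B1 0 = 0 := by
        funext k; simp [hB1]
      show e' (B1 0) = 0
      rw [this, he'0]
    · intro b x
      have step1 : (∃ y : Fin (q+1) → ℝ, ∀ i, f i x + g i y ≤ b i)
          ↔ ∃ (y' : Fin q → ℝ) (t : ℝ), ∀ i, a i * t ≤ b i - f i x - g' i y' := by
        constructor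
        · rintro ⟨y, hy⟩
          refine ⟨Fin.tail y, y 0, fun i => ?_⟩
          have := hy i
          rw [← Fin.cons_self_tail y, hdec] at this
          linarith
        · rintro ⟨y', t, hy⟩
          refine ⟨Fin.cons t y', fun i => ?_⟩
          rw [hdec]
          have := hy i
          linarith
      have step2 : ∀ y' : Fin q → ℝ,
          (∃ t : ℝ, ∀ i, a i * t ≤ b i - f i x - g' i y')
          ↔ ∀ k, F1 k x + G1 k y' ≤ B1 b k := by
        intro y'
        rw [hMiff]
        apply forall_congr'
        intro k
        have hexp : ∑ i, M k i * (b i - f i x - g' i y')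
            = B1 b k - F1 k x - G1 k y' := by
          simp only [hB1, hF1, hG1, LinearMap.sum_apply, LinearMap.smul_apply, smul_eq_mul,
            mul_sub, Finset.sum_sub_distrib]
        rw [hexp]
        constructor <;> intro <;> linarith
      rw [step1]
      rw [exists_congr step2]
      exact hiff (B1 b) x

private lemma recc_poly {E : Type*} [AddCommGroup E] [Module ℝ E] {ι : Type} [Fintype ι]
    (f : ι → E →ₗ[ℝ] ℝ) (b : ι → ℝ) (hne : {x : E | ∀ i, f i x ≤ b i}.Nonempty) :
    recc {x : E | ∀ i, f i x ≤ b i} = {d | ∀ i, f i d ≤ 0} := by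
  ext d
  simp only [recc, Set.mem_setOf_eq]
  constructor
  · intro hd i
    obtain ⟨p, hp⟩ := hne
    have hk : ∀ k : ℕ, ∀ i, f i (p + k • d) ≤ b i := by
      intro k
      induction k with
      | zero => simpa using hp
      | succ k ih =>
        have h2 := hd _ ih
        have h3 : p + (k+1) • d = (p + k • d) + d := by
          rw [succ_nsmul, add_assoc]
        rw [h3]
        exact h2
    by_contra hpos
    push_neg at hpos
    obtain ⟨k, hk'⟩ := exists_nat_gt ((b i - f i p) / f i d)
    have h1 := hk k i
    rw [map_add, map_nsmul, nsmul_eq_mul] at h1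
    rw [div_lt_iff₀ hpos] at hk'
    linarith
  · intro hd p hp i
    rw [map_add]
    linarith [hd i, hp i]

theorem stmt9 {n q : ℕ} (F G Gstd : (Fin n → ℝ) → Set (Fin q → ℝ)) (C : Set (Fin q → ℝ))
    (hF : IsPolyhedron (graphOf F)) (hne : (graphOf F).Nonempty)
    (hG : graphOf G = recc (graphOf F))
    (hCp : IsPolyhedron C) (hCc : IsConvexCone C) (hC0 : (0 : Fin q → ℝ) ∈ C)
    (hGstd : graphOf Gstd = recc (graphOf (fun x => F x + C))) :
    (∀ x, F x + C = (F x + C) + (C + G 0)) ∧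
      (∀ x, G x + C = Gstd x + (C + G 0)) ∧
      (∀ xb, (F xb).Nonempty →
        ((¬ ∃ x, (F xb + C) ⊂ (F x + C)) ↔
          ¬ ∃ x, ((F xb + C) + (C + G 0)) ⊂ ((F x + C) + (C + G 0)))) := by
  classical
  obtain ⟨m, f, b, hFeq⟩ := hF
  obtain ⟨m₂, g, c, hCeq⟩ := hCp
  -- the cone is homogeneous
  have hc0 : ∀ j, 0 ≤ c j := by
    intro j
    have h0 : (0 : Fin q → ℝ) ∈ {y | ∀ j, g j y ≤ c j} := hCeq ▸ hC0
    simpa using h0 j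
  have hCg : C = {y | ∀ j, g j y ≤ 0} := by
    ext y
    simp only [Set.mem_setOf_eq]
    constructor
    · intro hy j
      by_contra hpos
      push_neg at hpos
      have hr : ((c j + 1) / g j y) • y ∈ C :=
        hCc.2 y hy _ (div_nonneg (by linarith [hc0 j]) hpos.le)
      rw [hCeq] at hr
      have hr2 := hr j
      rw [_root_.map_smul, smul_eq_mul, div_mul_cancel₀ _ (ne_of_gt hpos)] at hr2
      linarith
    · intro hy
      rw [hCeq]
      exact fun j => (hy j).trans (hc0 j)
  have hFgr : ∀ (x : Fin n → ℝ) (u : Fin q → ℝ), u ∈ F x ↔ ∀ i, f i (x, u) ≤ b i := by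
    intro x u
    simpa [graphOf] using Set.ext_iff.mp hFeq (x, u)
  have hGmem : ∀ (x : Fin n → ℝ) (d : Fin q → ℝ),
      d ∈ G x ↔ (x, d) ∈ recc (graphOf F) := by
    intro x d
    rw [← hG]
    exact Iff.rfl
  have hreccF : recc (graphOf F) = {z : (Fin n → ℝ) × (Fin q → ℝ) | ∀ i, f i z ≤ 0} := by
    rw [hFeq]; exact recc_poly f b (hFeq ▸ hne)
  -- Fourier–Motzkin elimination
  set φ : (Fin m ⊕ Fin m₂) → ((Fin n → ℝ) × (Fin q → ℝ)) →ₗ[ℝ] ℝ :=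
    Sum.elim (fun i => (f i).comp ((LinearMap.inl ℝ _ _).comp (LinearMap.fst ℝ _ _)))
             (fun j => (g j).comp (LinearMap.snd ℝ _ _)) with hφ
  set γ : (Fin m ⊕ Fin m₂) → (Fin q → ℝ) →ₗ[ℝ] ℝ :=
    Sum.elim (fun i => (f i).comp (LinearMap.inr ℝ _ _)) (fun j => -(g j)) with hγ
  obtain ⟨κ, _, f', e, he0, hiff⟩ := fmN q φ γ
  have hφγ : ∀ (x : Fin n → ℝ) (y u : Fin q → ℝ) (k : Fin m ⊕ Fin m₂),
      φ k (x, y) + γ k u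
        = Sum.elim (fun i => f i (x, u)) (fun j => g j (y - u)) k := by
    rintro x y u (i | j)
    · simp only [hφ, hγ, Sum.elim_inl, LinearMap.comp_apply, LinearMap.fst_apply,
        LinearMap.inl_apply, LinearMap.inr_apply]
      rw [← map_add, Prod.mk_add_mk, add_zero, zero_add]
    · simp only [hφ, hγ, Sum.elim_inr, LinearMap.comp_apply, LinearMap.snd_apply,
        LinearMap.neg_apply, map_sub]
      ring
  have hsys : ∀ (b0 : Fin m → ℝ) (x : Fin n → ℝ) (y : Fin q → ℝ),
      (∃ u, ∀ k, φ k (x, y) + γ k u ≤ Sum.elim b0 0 k) ↔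
      ∃ u, (∀ i, f i (x, u) ≤ b0 i) ∧ (∀ j, g j (y - u) ≤ 0) := by
    intro b0 x y
    apply exists_congr; intro u
    constructor
    · intro h
      refine ⟨fun i => ?_, fun j => ?_⟩
      · have h1 := h (Sum.inl i); rw [hφγ] at h1; simpa using h1
      · have h1 := h (Sum.inr j); rw [hφγ] at h1; simpa using h1
    · rintro ⟨h1, h2⟩ (i | j)
      · rw [hφγ]; simpa using h1 i
      · rw [hφγ]; simpa using h2 j
  have hmemstd : ∀ (x : Fin n → ℝ) (y : Fin q → ℝ),
      y ∈ F x + C ↔ ∃ u, (∀ i, f i (x, u) ≤ b i) ∧ (∀ j, g j (y - u) ≤ 0) := by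
    intro x y
    rw [Set.mem_add]
    constructor
    · rintro ⟨u, hu, v, hv, rfl⟩
      refine ⟨u, (hFgr x u).1 hu, ?_⟩
      have hv' : u + v - u = v := by abel
      rw [hv']
      rw [hCg] at hv
      exact hv
    · rintro ⟨u, hu, hv⟩
      refine ⟨u, (hFgr x u).2 hu, y - u, ?_, by abel⟩
      rw [hCg]; exact hv
  have hgrstd : graphOf (fun x => F x + C)
      = {z : (Fin n → ℝ) × (Fin q → ℝ) | ∀ k, f' k z ≤ e (Sum.elim b 0) k} := by
    ext ⟨x, y⟩
    show y ∈ F x + C ↔ _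
    rw [hmemstd]
    exact (hsys b x y).symm.trans (hiff (Sum.elim b 0) (x, y))
  have hstdne : (graphOf (fun x => F x + C)).Nonempty := by
    obtain ⟨⟨x0, y0⟩, h0⟩ := hne
    exact ⟨(x0, y0), Set.mem_add.2 ⟨y0, h0, 0, hC0, add_zero y0⟩⟩
  have hzs : (0 : (Fin m ⊕ Fin m₂) → ℝ) = Sum.elim (0 : Fin m → ℝ) (0 : Fin m₂ → ℝ) := by
    funext k; cases k <;> rfl
  have hreccstd : ∀ (x : Fin n → ℝ) (y : Fin q → ℝ),
      (x, y) ∈ recc (graphOf (fun x => F x + C)) ↔ ∃ u, u ∈ G x ∧ y - u ∈ C := by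
    intro x y
    rw [hgrstd, recc_poly f' (e (Sum.elim b 0)) (hgrstd ▸ hstdne)]
    simp only [Set.mem_setOf_eq]
    have h0 : (∀ k, f' k (x, y) ≤ 0) ↔ (∀ k, f' k (x, y)
        ≤ e (Sum.elim (0 : Fin m → ℝ) (0 : Fin m₂ → ℝ)) k) := by
      rw [← hzs, he0]
      exact Iff.rfl
    rw [h0, ← hiff (Sum.elim (0 : Fin m → ℝ) (0 : Fin m₂ → ℝ)) (x, y), hsys 0 x y]
    apply exists_congr; intro u
    have hu1 : u ∈ G x ↔ ∀ i, f i (x, u) ≤ 0 := by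
      rw [hGmem, hreccF]; exact Iff.rfl
    have hu2 : y - u ∈ C ↔ ∀ j, g j (y - u) ≤ 0 := by
      rw [hCg]; exact Iff.rfl
    simp only [Pi.zero_apply]
    rw [hu1, hu2]
  have hGstd' : ∀ x, Gstd x = G x + C := by
    intro x
    ext y
    have h1 : y ∈ Gstd x ↔ (x, y) ∈ graphOf Gstd := Iff.rfl
    rw [h1, hGstd, hreccstd, Set.mem_add]
    constructor
    · rintro ⟨u, hu, hv⟩
      exact ⟨u, hu, y - u, hv, by abel⟩
    · rintro ⟨u, hu, v, hv, rfl⟩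
      refine ⟨u, hu, ?_⟩
      have : u + v - u = v := by abel
      rw [this]; exact hv
  -- elementary absorption facts
  have hzeroG0 : (0 : Fin q → ℝ) ∈ G 0 := by
    rw [hGmem]
    intro p hp
    convert hp using 1
    exact add_zero p
  have hCC : ∀ c1 ∈ C, ∀ c2 ∈ C, c1 + c2 ∈ C := by
    intro c1 h1 c2 h2
    have hm := hCc.1 h1 h2 (by norm_num : (0:ℝ) ≤ 1/2) (by norm_num : (0:ℝ) ≤ 1/2)
      (by norm_num)
    have h2' := hCc.2 _ hm 2 (by norm_num)
    have he : (2:ℝ) • ((1/2 : ℝ) • c1 + (1/2 : ℝ) • c2) = c1 + c2 := by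
      rw [smul_add, smul_smul, smul_smul]
      norm_num
    rwa [he] at h2'
  have hGadd : ∀ (x : Fin n → ℝ) (d u : Fin q → ℝ), d ∈ G x → u ∈ G 0 → d + u ∈ G x := by
    intro x d u hd hu
    rw [hGmem] at hd hu ⊢
    intro p hp
    have hsplit : ((x, d + u) : (Fin n → ℝ) × (Fin q → ℝ)) = (x, d) + ((0 : Fin n → ℝ), u) := by
      rw [Prod.mk_add_mk, add_zero]
    rw [hsplit, ← add_assoc]
    exact hu _ (hd p hp)
  have hFabsorb : ∀ (x : Fin n → ℝ) (y u : Fin q → ℝ), y ∈ F x → u ∈ G 0 → y + u ∈ F x := by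
    intro x y u hy hu
    rw [hGmem] at hu
    have h1 := hu (x, y) hy
    rw [Prod.mk_add_mk, add_zero] at h1
    exact h1
  have habsorb : ∀ S : Set (Fin q → ℝ), (∀ y u, y ∈ S → u ∈ G 0 → y + u ∈ S) →
      S + C = (S + C) + (C + G 0) := by
    intro S hS
    ext y
    rw [Set.mem_add (s := S + C)]
    constructor
    · intro hy
      exact ⟨y, hy, 0, Set.mem_add.2 ⟨0, hC0, 0, hzeroG0, add_zero 0⟩, add_zero y⟩
    · rintro ⟨p, hp, r, hr, rfl⟩
      obtain ⟨s, hs, v, hv, rfl⟩ := Set.mem_add.1 hp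
      obtain ⟨w, hw, u, hu, rfl⟩ := Set.mem_add.1 hr
      exact Set.mem_add.2 ⟨s + u, hS s u hs hu, v + w, hCC v hv w hw, by abel⟩
  have bullet1 : ∀ x, F x + C = (F x + C) + (C + G 0) :=
    fun x => habsorb (F x) (fun y u hy hu => hFabsorb x y u hy hu)
  refine ⟨bullet1, ?_, ?_⟩
  · intro x
    rw [hGstd' x]
    exact habsorb (G x) (fun y u hy hu => hGadd x y u hy hu)
  · intro xb _
    have hA : ∀ x, (F x + C) + (C + G 0) = F x + C := fun x => (bullet1 x).symm
    simp only [hA]
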